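/- Let N ≥ 3 be a prime and let M_k(N) be the N^k × N^k matrices over ZMod N defined recursively as above. Then for every k ≥ 1, M_k(N) has multiplicity N^{k−1}: for any two distinct rows u, v of M_k(N) and every a ∈ ZMod N, the number of column indices i with u_i − v_i = a (mod N) equals exactly N^{k−1}. -/

import Mathlib

/-- The `N × N` matrix `M_1(N)` over `ZMod N` with entries
`m_{ij} = i + Σ_{l=1}^{j-i} (N - l + 1) (mod N)` for `i ≤ j`, and `m_{ij} = m_{ji}` for `i > j`. -/
def M1 (N : ℕ) (i j : ℕ) : ZMod N :=
  if i ≤ j then ((i + ∑ l ∈ Finset.Icc 1 (j - i), (N - l + 1) : ℕ) : ZMod N)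
  else ((j + ∑ l ∈ Finset.Icc 1 (i - j), (N - l + 1) : ℕ) : ZMod N)

/-- The recursively defined `N^k × N^k` matrices `M_k(N)`: the entry of `M_{k+1}(N)` at
position `(i·N^k + p, j·N^k + q)` is `M_k(N)_{pq} + M_1(N)_{ij}`; the base case `k = 0` is the
`1 × 1` zero matrix, so that `M_1(N)` is recovered at `k = 1`. -/
def Mk (N : ℕ) : ℕ → ℕ → ℕ → ZMod N
  | 0, _, _ => 0
  | k + 1, a, b => Mk N k (a % N ^ k) (b % N ^ k) + M1 N (a / N ^ k) (b / N ^ k)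

section Aux

variable {N : ℕ}

lemma natCast_inj_lt [NeZero N] {i j : ℕ} (hi : i < N) (hj : j < N)
    (h : (i : ZMod N) = j) : i = j := by
  have := congrArg ZMod.val h
  rwa [ZMod.val_natCast_of_lt hi, ZMod.val_natCast_of_lt hj] at this

lemma sum_cast : ∀ d : ℕ, d ≤ N →
    ((∑ l ∈ Finset.Icc 1 d, (N - l + 1) : ℕ) : ZMod N) * 2
      = (d : ZMod N) - (d : ZMod N) ^ 2
  | 0, _ => by simp
  | d + 1, hd => by
    have IH := sum_cast d (by omega)
    rw [Finset.sum_Icc_succ_top (by omega : 1 ≤ d + 1)]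
    have h1 : N - (d + 1) + 1 = N - d := by omega
    have h2 : ((N - d : ℕ) : ZMod N) = -(d : ZMod N) := by
      rw [Nat.cast_sub (by omega), ZMod.natCast_self]; ring
    rw [h1, Nat.cast_add, h2, Nat.cast_add, Nat.cast_one]
    linear_combination IH

lemma M1_two {i j : ℕ} (hi : i < N) (hj : j < N) :
    M1 N i j * 2 = (i : ZMod N) + j - ((i : ZMod N) - j) ^ 2 := by
  unfold M1
  split_ifs with h
  · have hs := sum_cast (N := N) (j - i) (by omega)
    rw [Nat.cast_sub h] at hs
    rw [Nat.cast_add]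
    linear_combination hs
  · have h' : j ≤ i := by omega
    have hs := sum_cast (N := N) (i - j) (by omega)
    rw [Nat.cast_sub h'] at hs
    rw [Nat.cast_add]
    linear_combination hs

lemma M1_diff {i j t : ℕ} (hi : i < N) (hj : j < N) (ht : t < N) :
    (M1 N i t - M1 N j t) * 2
      = ((i : ZMod N) - j) * (1 - i - j + 2 * t) := by
  have h1 := M1_two (N := N) hi ht
  have h2 := M1_two (N := N) hj ht
  linear_combination h1 - h2

lemma count_affine [NeZero N] [Fact N.Prime] {s : ZMod N} (hs : s ≠ 0) (c a : ZMod N) :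
    ((Finset.range N).filter fun t : ℕ => s * (t : ZMod N) + c = a).card = 1 := by
  have hset : ((Finset.range N).filter fun t : ℕ => s * (t : ZMod N) + c = a)
      = {((a - c) * s⁻¹).val} := by
    ext t
    simp only [Finset.mem_filter, Finset.mem_range, Finset.mem_singleton]
    constructor
    · rintro ⟨ht, h⟩
      have ht' : (t : ZMod N) = (a - c) * s⁻¹ := by
        field_simp
        linear_combination h
      rw [← ht', ZMod.val_natCast_of_lt ht]
    · rintro rfl
      refine ⟨ZMod.val_lt _, ?_⟩
      rw [ZMod.natCast_val, ZMod.cast_id]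
      field_simp
      ring
  rw [hset, Finset.card_singleton]

lemma count_M1 (hN : 3 ≤ N) [Fact N.Prime] {i j : ℕ} (hi : i < N) (hj : j < N)
    (hij : i ≠ j) (a : ZMod N) :
    ((Finset.range N).filter fun t => M1 N i t - M1 N j t = a).card = 1 := by
  haveI : NeZero N := ⟨by omega⟩
  have h2 : (2 : ZMod N) ≠ 0 := by
    intro h
    have : ((2 : ℕ) : ZMod N) = 0 := by exact_mod_cast h
    have := (ZMod.natCast_eq_zero_iff 2 N).mp this
    have := Nat.le_of_dvd (by norm_num) this
    omega
  have hij' : (i : ZMod N) ≠ j := fun h => hij (natCast_inj_lt hi hj h)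
  have hs : (2 : ZMod N) * ((i : ZMod N) - j) ≠ 0 :=
    mul_ne_zero h2 (sub_ne_zero.mpr hij')
  have key : ∀ t ∈ Finset.range N,
      (M1 N i t - M1 N j t = a)
        ↔ ((2 : ZMod N) * ((i : ZMod N) - j) * (t : ZMod N)
            + ((i : ZMod N) - j) * (1 - (i : ZMod N) - j) = a * 2) := by
    intro t ht
    have ht' : t < N := Finset.mem_range.mp ht
    have hd := M1_diff (N := N) hi hj ht'
    constructor
    · intro h; linear_combination 2 * h - hd
    · intro h
      exact mul_right_cancel₀ h2 (by linear_combination hd + h)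
  rw [Finset.filter_congr key]
  exact count_affine hs _ _

lemma sum_mul_range (m n : ℕ) (hm : 0 < m) (f : ℕ → ℕ) :
    ∑ t ∈ Finset.range (n * m), f t
      = ∑ u ∈ Finset.range n, ∑ v ∈ Finset.range m, f (u * m + v) := by
  rw [← Finset.sum_product']
  apply Finset.sum_nbij' (fun t => (t / m, t % m)) (fun p => p.1 * m + p.2)
  · intro t ht
    simp only [Finset.mem_range, Finset.mem_product] at *
    exact ⟨Nat.div_lt_iff_lt_mul hm |>.mpr (by rw [mul_comm] at ht ⊢; omega),
      Nat.mod_lt _ hm⟩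
  · intro p hp
    simp only [Finset.mem_range, Finset.mem_product] at *
    have : (p.1 + 1) * m ≤ n * m := Nat.mul_le_mul_right m hp.1
    calc p.1 * m + p.2 < p.1 * m + m := by omega
      _ = (p.1 + 1) * m := by ring
      _ ≤ n * m := this
  · intro t _
    exact Nat.div_add_mod' t m
  · intro p hp
    simp only [Finset.mem_product, Finset.mem_range] at hp
    have h1 : (p.1 * m + p.2) / m = p.1 := by
      rw [Nat.add_comm, Nat.add_mul_div_right _ _ hm, Nat.div_eq_of_lt hp.2,
        Nat.zero_add]
    have h2 : (p.1 * m + p.2) % m = p.2 := by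
      rw [Nat.add_comm, Nat.add_mul_mod_self_right, Nat.mod_eq_of_lt hp.2]
    exact Prod.ext h1 h2
  · intro t _
    exact congrArg f (Nat.div_add_mod' t m).symm

lemma Mk_count (hN : 3 ≤ N) [Fact N.Prime] :
    ∀ k, 1 ≤ k → ∀ i j : ℕ, i < N ^ k → j < N ^ k → i ≠ j → ∀ a : ZMod N,
    ((Finset.range (N ^ k)).filter fun t => Mk N k i t - Mk N k j t = a).card
      = N ^ (k - 1) := by
  intro k hk
  induction k, hk using Nat.le_induction with
  | base =>
    intro i j hi hj hij a
    have hMk : ∀ x y : ℕ, Mk N 1 x y = M1 N x y := by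
      intro x y; simp [Mk]
    simp only [pow_one] at hi hj ⊢
    simp only [hMk, pow_zero]
    exact count_M1 hN hi hj hij a
  | succ k hk IH =>
    intro i j hi hj hij a
    have hm0 : 0 < N ^ k := pow_pos (by omega) k
    have hNk1 : N ^ (k + 1) = N * N ^ k := by ring
    have expand : ∀ x u v : ℕ, v < N ^ k →
        Mk N (k + 1) x (u * N ^ k + v)
          = Mk N k (x % N ^ k) v + M1 N (x / N ^ k) u := by
      intro x u v hv
      have hmod : (u * N ^ k + v) % N ^ k = v := by
        rw [Nat.add_comm, Nat.add_mul_mod_self_right, Nat.mod_eq_of_lt hv]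
      have hdiv : (u * N ^ k + v) / N ^ k = u := by
        rw [Nat.add_comm, Nat.add_mul_div_right _ _ hm0, Nat.div_eq_of_lt hv,
          Nat.zero_add]
      show Mk N k (x % N ^ k) ((u * N ^ k + v) % N ^ k)
          + M1 N (x / N ^ k) ((u * N ^ k + v) / N ^ k) = _
      rw [hmod, hdiv]
    rw [Finset.card_filter, hNk1, sum_mul_range (N ^ k) N hm0]
    have step1 : ∀ u ∈ Finset.range N, ∀ v ∈ Finset.range (N ^ k),
        (if Mk N (k + 1) i (u * N ^ k + v) - Mk N (k + 1) j (u * N ^ k + v) = a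
          then 1 else 0)
        = (if (Mk N k (i % N ^ k) v + M1 N (i / N ^ k) u)
              - (Mk N k (j % N ^ k) v + M1 N (j / N ^ k) u) = a then 1 else 0) := by
      intro u _ v hv
      rw [expand i u v (Finset.mem_range.mp hv), expand j u v (Finset.mem_range.mp hv)]
    rw [Finset.sum_congr rfl fun u hu =>
      Finset.sum_congr rfl fun v hv => step1 u hu v hv]
    have hiN : i / N ^ k < N := Nat.div_lt_iff_lt_mul hm0 |>.mpr (by omega)
    have hjN : j / N ^ k < N := Nat.div_lt_iff_lt_mul hm0 |>.mpr (by omega)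
    by_cases hpq : i % N ^ k = j % N ^ k
    · -- inner rows equal; top-level indices differ
      have hdivne : i / N ^ k ≠ j / N ^ k := by
        intro h
        apply hij
        rw [← Nat.div_add_mod i (N ^ k), ← Nat.div_add_mod j (N ^ k), h, hpq]
      have hcond : ∀ u v : ℕ,
          ((Mk N k (i % N ^ k) v + M1 N (i / N ^ k) u)
            - (Mk N k (j % N ^ k) v + M1 N (j / N ^ k) u) = a)
          ↔ (M1 N (i / N ^ k) u - M1 N (j / N ^ k) u = a) := by
        intro u v
        rw [hpq]
        constructor <;> intro h <;> linear_combination h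
      simp only [hcond]
      have inner : ∀ u ∈ Finset.range N,
          (∑ _v ∈ Finset.range (N ^ k),
            (if M1 N (i / N ^ k) u - M1 N (j / N ^ k) u = a then 1 else 0))
          = (if M1 N (i / N ^ k) u - M1 N (j / N ^ k) u = a then N ^ k else 0) := by
        intro u _
        split_ifs <;> simp
      rw [Finset.sum_congr rfl inner, ← Finset.sum_filter,
        Finset.sum_const, smul_eq_mul, count_M1 hN hiN hjN hdivne a]
      simp
    · -- inner rows differ
      have hcond : ∀ u v : ℕ,
          ((Mk N k (i % N ^ k) v + M1 N (i / N ^ k) u)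
            - (Mk N k (j % N ^ k) v + M1 N (j / N ^ k) u) = a)
          ↔ (Mk N k (i % N ^ k) v - Mk N k (j % N ^ k) v
              = a - (M1 N (i / N ^ k) u - M1 N (j / N ^ k) u)) := by
        intro u v
        constructor <;> intro h <;> linear_combination h
      simp only [hcond]
      have inner : ∀ u ∈ Finset.range N,
          (∑ v ∈ Finset.range (N ^ k),
            (if Mk N k (i % N ^ k) v - Mk N k (j % N ^ k) v
                = a - (M1 N (i / N ^ k) u - M1 N (j / N ^ k) u) then 1 else 0))
          = N ^ (k - 1) := by
        intro u _
        rw [← Finset.card_filter]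
        exact IH (i % N ^ k) (j % N ^ k) (Nat.mod_lt _ hm0) (Nat.mod_lt _ hm0) hpq _
      rw [Finset.sum_congr rfl inner, Finset.sum_const, Finset.card_range, smul_eq_mul]
      have hk' : k - 1 + 1 = k := by omega
      calc N * N ^ (k - 1) = N ^ (k - 1 + 1) := (pow_succ' N (k - 1)).symm
        _ = N ^ (k + 1 - 1) := by rw [hk']; rfl

end Aux

theorem Mk_multiplicity (N : ℕ) (hN : 3 ≤ N) (hNp : N.Prime)
    (k : ℕ) (hk : 1 ≤ k) (i j : Fin (N ^ k)) (hij : i ≠ j) :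
    ∀ a : ZMod N,
      (Finset.univ.filter fun t : Fin (N ^ k) => Mk N k i t - Mk N k j t = a).card
        = N ^ (k - 1) := by
  intro a
  haveI : Fact N.Prime := ⟨hNp⟩
  have hij' : (i : ℕ) ≠ (j : ℕ) := fun h => hij (Fin.val_injective h)
  have h := Mk_count hN k hk i.val j.val i.isLt j.isLt hij' a
  rw [Finset.card_filter,
    Fin.sum_univ_eq_sum_range (fun t : ℕ => if Mk N k i t - Mk N k j t = a then 1 else 0),
    ← Finset.card_filter]
  exact h
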